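/- The unique Laurent series solution x ∈ ℚ((t⁻¹)) of degree ≥ 1 of 3x³ − 3tx² − 3ax + at = 0 (a ∈ ℚ a parameter) satisfies the Riccati differential equation (t⁴ + 3at² + 3a²)x' = a² + atx + t²x². -/

import Mathlib

open Polynomial

/-- The formal derivative (with respect to `X`) of a formal Laurent series. -/
noncomputable def lsDeriv {F : Type*} [Field F] (f : LaurentSeries F) : LaurentSeries F where
  coeff n := (n + 1 : ℤ) * f.coeff (n + 1)
  isPWO_support' := by
    refine ((HahnSeries.single (-1 : ℤ) (1 : F) * f).isPWO_support).mono ?_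
    intro n hn
    have hf : f.coeff (n + 1) ≠ 0 := by
      intro h
      apply hn
      simp [h]
    have hcoeff : (HahnSeries.single (-1 : ℤ) (1 : F) * f).coeff n = f.coeff (n + 1) := by
      have := HahnSeries.coeff_single_mul_add (r := (1 : F)) (x := f) (b := (-1 : ℤ)) (a := n + 1)
      simpa using this
    simp only [HahnSeries.mem_support, hcoeff]
    exact hf

/-- `t`, as an element of `ℚ((t⁻¹))`: the field of Laurent series in `X = t⁻¹`,
so `t = X⁻¹` is the Hahn series with a single coefficient `1` in degree `-1`. -/
noncomputable def lsT : LaurentSeries ℚ := HahnSeries.single (-1 : ℤ) 1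

/-- The formal derivative with respect to `t` on `ℚ((t⁻¹))`: since `X = t⁻¹`,
`d/dt = -X² · d/dX`. -/
noncomputable def tDeriv (f : LaurentSeries ℚ) : LaurentSeries ℚ :=
  -(HahnSeries.single (2 : ℤ) (1 : ℚ)) * lsDeriv f

section Aux

/-- The Euler operator `f ↦ X·(df/dX)` on Laurent series. -/
noncomputable def euler (f : LaurentSeries ℚ) : LaurentSeries ℚ where
  coeff n := (n : ℤ) * f.coeff n
  isPWO_support' := f.isPWO_support.mono (by
    intro n hn
    simp only [Function.mem_support, ne_eq] at hn ⊢
    intro h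
    exact hn (by simp [h]))

lemma euler_coeff (f : LaurentSeries ℚ) (n : ℤ) :
    (euler f).coeff n = (n : ℚ) * f.coeff n := rfl

lemma euler_support_subset (f : LaurentSeries ℚ) : (euler f).support ⊆ f.support := by
  intro n hn
  simp only [HahnSeries.mem_support, euler_coeff, ne_eq] at hn ⊢
  intro h
  exact hn (by simp [h])

lemma euler_mul (f g : LaurentSeries ℚ) :
    euler (f * g) = euler f * g + f * euler g := by
  ext n
  rw [HahnSeries.coeff_add,
    HahnSeries.coeff_mul_left' f.isPWO_support (euler_support_subset f),
    HahnSeries.coeff_mul_right' g.isPWO_support (euler_support_subset g),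
    euler_coeff, HahnSeries.coeff_mul, Finset.mul_sum, ← Finset.sum_add_distrib]
  refine Finset.sum_congr rfl ?_
  rintro ⟨i, j⟩ hij
  have hsum : i + j = n := (Finset.mem_addAntidiagonal.mp hij).2.2
  simp only [euler_coeff]
  rw [← hsum]
  push_cast
  ring

lemma lsDeriv_coeff (f : LaurentSeries ℚ) (n : ℤ) :
    (lsDeriv f).coeff n = ((n + 1 : ℤ) : ℚ) * f.coeff (n + 1) := rfl

lemma lsDeriv_eq (f : LaurentSeries ℚ) :
    lsDeriv f = HahnSeries.single (-1 : ℤ) (1 : ℚ) * euler f := by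
  ext n
  have h := HahnSeries.coeff_single_mul_add (r := (1 : ℚ)) (x := euler f)
      (a := n + 1) (b := (-1 : ℤ))
  have hn : n + 1 + (-1 : ℤ) = n := by ring
  rw [hn] at h
  rw [h, one_mul, lsDeriv_coeff, euler_coeff]

lemma lsDeriv_mul (f g : LaurentSeries ℚ) :
    lsDeriv (f * g) = lsDeriv f * g + f * lsDeriv g := by
  simp only [lsDeriv_eq, euler_mul]
  ring

lemma tDeriv_mul (f g : LaurentSeries ℚ) :
    tDeriv (f * g) = tDeriv f * g + f * tDeriv g := by
  simp only [tDeriv, lsDeriv_mul]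
  ring

lemma lsDeriv_add (f g : LaurentSeries ℚ) :
    lsDeriv (f + g) = lsDeriv f + lsDeriv g := by
  ext n
  simp [lsDeriv_coeff, mul_add]

lemma lsDeriv_sub (f g : LaurentSeries ℚ) :
    lsDeriv (f - g) = lsDeriv f - lsDeriv g := by
  ext n
  simp [lsDeriv_coeff, mul_sub]

lemma tDeriv_add (f g : LaurentSeries ℚ) :
    tDeriv (f + g) = tDeriv f + tDeriv g := by
  simp only [tDeriv, lsDeriv_add, mul_add]

lemma tDeriv_sub (f g : LaurentSeries ℚ) :
    tDeriv (f - g) = tDeriv f - tDeriv g := by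
  simp only [tDeriv, lsDeriv_sub, mul_sub]

lemma lsDeriv_zero : lsDeriv (0 : LaurentSeries ℚ) = 0 := by
  ext n
  simp [lsDeriv_coeff]

lemma tDeriv_zero : tDeriv (0 : LaurentSeries ℚ) = 0 := by
  simp [tDeriv, lsDeriv_zero]

lemma lsDeriv_single (m : ℤ) (c : ℚ) :
    lsDeriv (HahnSeries.single m c) = HahnSeries.single (m - 1) ((m : ℚ) * c) := by
  ext n
  rw [lsDeriv_coeff, HahnSeries.coeff_single, HahnSeries.coeff_single]
  rcases eq_or_ne (n + 1) m with h | h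
  · rw [if_pos h, if_pos (by omega), ← h]
  · rw [if_neg h, if_neg (by omega), mul_zero]

lemma alg_eq_single (q : ℚ) :
    algebraMap ℚ (LaurentSeries ℚ) q = HahnSeries.single (0 : ℤ) q := by
  rw [HahnSeries.algebraMap_apply' (Γ := ℤ) (R := ℚ), PowerSeries.algebraMap_apply,
    Algebra.algebraMap_self, RingHom.id_apply, HahnSeries.ofPowerSeries_C, HahnSeries.C_apply]

lemma neg_single (m : ℤ) (c : ℚ) :
    -(HahnSeries.single m c) = HahnSeries.single m (-c) := by
  ext n
  rw [HahnSeries.coeff_neg, HahnSeries.coeff_single, HahnSeries.coeff_single]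
  split_ifs <;> simp

lemma tDeriv_lsT : tDeriv lsT = 1 := by
  rw [tDeriv, lsT, lsDeriv_single, neg_single, HahnSeries.single_mul_single]
  norm_num

lemma tDeriv_algebraMap (q : ℚ) : tDeriv (algebraMap ℚ (LaurentSeries ℚ) q) = 0 := by
  rw [tDeriv, alg_eq_single, lsDeriv_single]
  simp

lemma tDeriv_three : tDeriv (3 : LaurentSeries ℚ) = 0 := by
  rw [show (3 : LaurentSeries ℚ) = algebraMap ℚ (LaurentSeries ℚ) 3 from (map_ofNat _ 3).symm]
  exact tDeriv_algebraMap 3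

lemma coeff_lsT_mul (y : LaurentSeries ℚ) (n : ℤ) :
    (lsT * y).coeff n = y.coeff (n + 1) := by
  have h := HahnSeries.coeff_single_mul_add (r := (1 : ℚ)) (x := y)
      (a := n + 1) (b := (-1 : ℤ))
  have hn : n + 1 + (-1 : ℤ) = n := by ring
  rw [hn, one_mul] at h
  exact h

lemma coeff_alg_mul (q : ℚ) (y : LaurentSeries ℚ) (n : ℤ) :
    (algebraMap ℚ (LaurentSeries ℚ) q * y).coeff n = q * y.coeff n := by
  rw [alg_eq_single, HahnSeries.coeff_single_zero_mul]

lemma coeff_three_mul (y : LaurentSeries ℚ) (n : ℤ) :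
    ((3 : LaurentSeries ℚ) * y).coeff n = 3 * y.coeff n := by
  rw [show (3 : LaurentSeries ℚ) = algebraMap ℚ (LaurentSeries ℚ) 3 from (map_ofNat _ 3).symm,
    coeff_alg_mul]

lemma lsT_coeff_ne {n : ℤ} (h : n ≠ -1) : lsT.coeff n = 0 :=
  HahnSeries.coeff_single_of_ne h

end Aux

/-- The unique Laurent series solution `x ∈ ℚ((t⁻¹))` of degree ≥ 1 (i.e. `x.order ≤ -1`)
of `3x³ − 3tx² − 3ax + at = 0` (`a ∈ ℚ` a parameter) satisfies the Riccati differential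
equation `(t⁴ + 3at² + 3a²)x' = a² + atx + t²x²`. -/
theorem riccati_of_cubic_no5 (a : ℚ) (x : LaurentSeries ℚ)
    (hroot : 3 * x ^ 3 - 3 * lsT * x ^ 2
        - 3 * algebraMap ℚ (LaurentSeries ℚ) a * x + algebraMap ℚ (LaurentSeries ℚ) a * lsT = 0)
    (hdeg : x.order ≤ -1) :
    (lsT ^ 4 + 3 * algebraMap ℚ (LaurentSeries ℚ) a * lsT ^ 2
        + 3 * algebraMap ℚ (LaurentSeries ℚ) a ^ 2) * tDeriv x =
      algebraMap ℚ (LaurentSeries ℚ) a ^ 2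
        + algebraMap ℚ (LaurentSeries ℚ) a * lsT * x + lsT ^ 2 * x ^ 2 := by
  set A : LaurentSeries ℚ := algebraMap ℚ (LaurentSeries ℚ) a with hA
  -- x is nonzero
  have hx0 : x ≠ 0 := by
    intro h
    rw [h, HahnSeries.order_zero] at hdeg
    omega
  have hxx0 : x * x ≠ 0 := mul_ne_zero hx0 hx0
  -- restated cubic with explicit products
  have hroot' : 3 * (x * (x * x)) - 3 * (lsT * (x * x)) - 3 * (A * x) + A * lsT = 0 := by
    linear_combination hroot
  -- the order of x is exactly -1
  have horder : x.order = -1 := by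
    refine le_antisymm hdeg ?_
    by_contra h
    push_neg at h
    set m := x.order with hm
    have hm2 : m ≤ -2 := by omega
    set c := x.coeff m with hc
    have hcne : c ≠ 0 := HahnSeries.coeff_order_eq_zero.not.mpr hx0
    have hxxord : (x * x).order = m + m := HahnSeries.order_mul hx0 hx0
    have hxxc : (x * x).coeff (m + m) = c * c := by
      have := HahnSeries.coeff_mul_order_add_order x x
      rwa [HahnSeries.leadingCoeff_eq, ← hm, ← hc] at this
    have hx3c : (x * (x * x)).coeff (3 * m) = c * (c * c) := by
      have := HahnSeries.coeff_mul_order_add_order x (x * x)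
      rw [HahnSeries.leadingCoeff_eq, HahnSeries.leadingCoeff_eq, hxxord, ← hm, hxxc, ← hc]
        at this
      have h3 : m + (m + m) = 3 * m := by ring
      rwa [h3] at this
    have h0 := congrArg (fun f => HahnSeries.coeff f (3 * m)) hroot'
    simp only [HahnSeries.coeff_sub, HahnSeries.coeff_add, HahnSeries.coeff_zero] at h0
    rw [coeff_three_mul, coeff_three_mul, coeff_three_mul, coeff_lsT_mul, coeff_alg_mul,
      coeff_alg_mul, hx3c] at h0
    rw [HahnSeries.coeff_eq_zero_of_lt_order (by rw [hxxord]; omega),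
      HahnSeries.coeff_eq_zero_of_lt_order (x := x) (by rw [← hm]; omega),
      lsT_coeff_ne (by omega)] at h0
    simp only [mul_zero, sub_zero, add_zero] at h0
    have h1 : c * (c * c) = 0 := by linarith
    rcases mul_eq_zero.mp h1 with h2 | h2
    · exact hcne h2
    · exact hcne (mul_self_eq_zero.mp h2)
  -- the leading coefficient of x is 1
  set c := x.coeff (-1) with hc
  have hcne : c ≠ 0 := by
    have := HahnSeries.coeff_order_eq_zero.not.mpr hx0
    rwa [horder, ← hc] at this
  have hxxc : (x * x).coeff (-2) = c * c := by
    have h2 : (-1 : ℤ) + -1 = -2 := by norm_num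
    have := HahnSeries.coeff_mul_order_add_order x x
    rwa [HahnSeries.leadingCoeff_eq, horder, ← hc, h2] at this
  have hxxord : (x * x).order = -2 := by
    rw [HahnSeries.order_mul hx0 hx0, horder]
    norm_num
  have hx3c : (x * (x * x)).coeff (-3) = c * (c * c) := by
    have := HahnSeries.coeff_mul_order_add_order x (x * x)
    rw [HahnSeries.leadingCoeff_eq, HahnSeries.leadingCoeff_eq, hxxord, horder, hxxc, ← hc]
      at this
    have h3 : (-1 : ℤ) + -2 = -3 := by norm_num
    rwa [h3] at this
  have hc1 : c = 1 := by
    have hm32 : (-3 : ℤ) + 1 = -2 := by norm_num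
    have h0 := congrArg (fun f => HahnSeries.coeff f (-3)) hroot'
    simp only [HahnSeries.coeff_sub, HahnSeries.coeff_add, HahnSeries.coeff_zero] at h0
    rw [coeff_three_mul, coeff_three_mul, coeff_three_mul, coeff_lsT_mul, coeff_alg_mul,
      coeff_alg_mul, hx3c, hm32, hxxc,
      HahnSeries.coeff_eq_zero_of_lt_order (x := x) (by rw [horder]; omega),
      lsT_coeff_ne (by omega)] at h0
    simp only [mul_zero, sub_zero, add_zero] at h0
    have h1 : 3 * (c * c) * (c - 1) = 0 := by ring_nf; linarith [h0]
    rcases mul_eq_zero.mp h1 with h2 | h2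
    · exact absurd (by rcases mul_eq_zero.mp (by linarith : c * c = 0) with h | h <;>
        [skip; exact h] <;> exact h) hcne
    · linarith
  -- the denominator is nonzero
  set D : LaurentSeries ℚ := 9 * x ^ 2 - 6 * lsT * x - 3 * A with hD
  have hDne : D ≠ 0 := by
    intro h
    have h0 := congrArg (fun f => HahnSeries.coeff f (-2)) h
    simp only [hD, HahnSeries.coeff_sub, HahnSeries.coeff_zero] at h0
    have h9 : (9 : LaurentSeries ℚ) = algebraMap ℚ (LaurentSeries ℚ) 9 := by
      rw [map_ofNat]
    have h6 : (6 : LaurentSeries ℚ) = algebraMap ℚ (LaurentSeries ℚ) 6 := by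
      rw [map_ofNat]
    have e1 : ((9 : LaurentSeries ℚ) * x ^ 2).coeff (-2) = 9 := by
      rw [h9, sq, coeff_alg_mul, hxxc, hc1]
      norm_num
    have e2 : ((6 : LaurentSeries ℚ) * lsT * x).coeff (-2) = 6 := by
      have hstep : (6 : LaurentSeries ℚ) * lsT * x
          = algebraMap ℚ (LaurentSeries ℚ) 6 * (lsT * x) := by
        rw [← h6]; ring
      have hm21 : (-2 : ℤ) + 1 = -1 := by norm_num
      rw [hstep, coeff_alg_mul, coeff_lsT_mul, hm21, ← hc, hc1]
      norm_num
    have e3 : ((3 : LaurentSeries ℚ) * A).coeff (-2) = 0 := by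
      rw [coeff_three_mul, hA, alg_eq_single, HahnSeries.coeff_single_of_ne (by omega)]
      ring
    rw [e1, e2, e3] at h0
    norm_num at h0
  -- differentiate the cubic
  have hd := congrArg tDeriv hroot'
  rw [tDeriv_zero] at hd
  have htA : tDeriv A = 0 := by rw [hA]; exact tDeriv_algebraMap a
  simp only [tDeriv_sub, tDeriv_add, tDeriv_mul, tDeriv_lsT, tDeriv_three, htA] at hd
  have hDeq : D * tDeriv x = 3 * x ^ 2 - A := by
    rw [hD]
    linear_combination hd
  -- conclude via the algebraic identity
  apply mul_left_cancel₀ hDne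
  rw [show D * ((lsT ^ 4 + 3 * A * lsT ^ 2 + 3 * A ^ 2) * tDeriv x)
      = (lsT ^ 4 + 3 * A * lsT ^ 2 + 3 * A ^ 2) * (D * tDeriv x) by ring, hDeq, hD]
  linear_combination (-(3 * lsT ^ 2 * x) - lsT ^ 3 - 3 * A * lsT) * hroot
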